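/- The function u(x) = ½((‖x‖ − 1)⁺)² on ℝ² is convex, continuously differentiable, and on the open set {‖x‖ > 1} it is twice differentiable with det(D²u(x)) = 1 − 1/‖x‖, while on the open ball {‖x‖ < 1} it is identically zero with det(D²u) = 0. -/

import Mathlib

open Matrix

/-- The Hessian matrix of `u : ℝ^d → ℝ` at `x`, in the standard basis. -/
noncomputable def hessianMatrix {d : ℕ} (u : EuclideanSpace ℝ (Fin d) → ℝ)
    (x : EuclideanSpace ℝ (Fin d)) : Matrix (Fin d) (Fin d) ℝ :=
  Matrix.of fun i j =>
    iteratedFDeriv ℝ 2 u x ![EuclideanSpace.single i 1, EuclideanSpace.single j 1]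

open Real Filter


section Aux

variable {E : Type*} [NormedAddCommGroup E] [InnerProductSpace ℝ E]

theorem myNorm_hasFDerivAt {x : E} (hx : x ≠ 0) :
    HasFDerivAt (fun y : E => ‖y‖) (‖x‖⁻¹ • innerSL ℝ x) x := by
  have hn : ‖x‖ ≠ 0 := norm_ne_zero_iff.2 hx
  have h1 : HasFDerivAt (fun y : E => ‖y‖ ^ 2) (2 • innerSL ℝ x) x :=
    (hasStrictFDerivAt_norm_sq x).hasFDerivAt
  have h2 : HasDerivAt Real.sqrt (1 / (2 * Real.sqrt (‖x‖ ^ 2))) (‖x‖ ^ 2) :=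
    Real.hasDerivAt_sqrt (by positivity)
  have h3 := h2.comp_hasFDerivAt x h1
  have he : (Real.sqrt ∘ fun y : E => ‖y‖ ^ 2) = fun y : E => ‖y‖ := by
    funext y; simp [Function.comp, Real.sqrt_sq (norm_nonneg y)]
  rw [he] at h3
  refine h3.congr_fderiv ?_
  rw [Real.sqrt_sq (norm_nonneg x)]
  ext v
  simp
  ring

noncomputable def Fmap (y : E) : E →L[ℝ] ℝ := (1 - ‖y‖⁻¹) • innerSL ℝ y

theorem v_hasFDerivAt {x : E} (hx : x ≠ 0) :
    HasFDerivAt (fun y : E => (1/2) * ‖y‖ ^ 2 - ‖y‖ + 1/2) (Fmap x) x := by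
  have h1 : HasFDerivAt (fun y : E => (1/2) * ‖y‖ ^ 2) ((1/2 : ℝ) • (2 • innerSL ℝ x)) x :=
    (hasStrictFDerivAt_norm_sq x).hasFDerivAt.const_smul (1/2 : ℝ)
  have h2 := (h1.sub (myNorm_hasFDerivAt hx)).add_const (1/2)
  refine h2.congr_fderiv ?_
  unfold Fmap
  ext v
  simp [sub_smul, smul_smul]

noncomputable def innerCLM : E →L[ℝ] E →L[ℝ] ℝ :=
  (isBoundedBilinearMap_inner (𝕜 := ℝ)).toContinuousLinearMap

@[simp] theorem innerCLM_apply (v w : E) : (innerCLM v) w = inner ℝ v w := rfl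

theorem innerCLM_eq_innerSL (v : E) : innerCLM v = innerSL ℝ v := by
  ext w; simp

theorem F_hasFDerivAt {x : E} (hx : x ≠ 0) :
    HasFDerivAt Fmap
      ((1 - ‖x‖⁻¹) • (innerCLM : E →L[ℝ] E →L[ℝ] ℝ)
        + ((‖x‖ ^ 3)⁻¹ • innerSL ℝ x).smulRight (innerSL ℝ x)) x := by
  have hn : ‖x‖ ≠ 0 := norm_ne_zero_iff.2 hx
  have hc : HasFDerivAt (fun y : E => 1 - ‖y‖⁻¹) ((‖x‖ ^ 3)⁻¹ • innerSL ℝ x) x := by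
    have hi : HasDerivAt (fun t : ℝ => t⁻¹) (-(‖x‖ ^ 2)⁻¹) ‖x‖ := by
      simpa using hasDerivAt_inv hn
    have := (hi.comp_hasFDerivAt x (myNorm_hasFDerivAt hx)).const_sub 1
    refine this.congr_fderiv ?_
    ext v
    have h3 : (‖x‖ ^ 3)⁻¹ = (‖x‖ ^ 2)⁻¹ * ‖x‖⁻¹ := by
      rw [← mul_inv, ← pow_succ]
    simp only [h3, ContinuousLinearMap.coe_smul', Pi.smul_apply, ContinuousLinearMap.neg_apply,
      smul_eq_mul, neg_neg, neg_mul]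
    ring
  have hf : HasFDerivAt (fun y : E => innerSL ℝ y) (innerCLM : E →L[ℝ] E →L[ℝ] ℝ) x := by
    have := (innerCLM : E →L[ℝ] E →L[ℝ] ℝ).hasFDerivAt (x := x)
    refine this.congr_of_eventuallyEq (Filter.Eventually.of_forall fun y => ?_)
    exact (innerCLM_eq_innerSL y).symm
  have := hc.smul hf
  exact this

end Aux

theorem g_hasDerivAt (t : ℝ) :
    HasDerivAt (fun s : ℝ => (1/2) * (max (s - 1) 0) ^ 2) (max (t - 1) 0) t := by
  rcases lt_trichotomy t 1 with h | h | h
  · have he : (fun s : ℝ => (1/2) * (max (s - 1) 0) ^ 2) =ᶠ[nhds t] fun _ => (0 : ℝ) := by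
      filter_upwards [Iio_mem_nhds h] with s hs
      rw [max_eq_right (by linarith [Set.mem_Iio.1 hs])]
      ring
    have : HasDerivAt (fun _ : ℝ => (0:ℝ)) 0 t := hasDerivAt_const t 0
    rw [max_eq_right (by linarith)]
    exact this.congr_of_eventuallyEq he
  · subst h
    rw [show max (1 - 1 : ℝ) 0 = 0 by norm_num]
    rw [hasDerivAt_iff_isLittleO]
    rw [Asymptotics.isLittleO_iff]
    intro c hc
    filter_upwards [Metric.ball_mem_nhds (1:ℝ) (by positivity : (0:ℝ) < 2*c)] with s hs
    have hd : |s - 1| < 2 * c := by simpa [Real.dist_eq] using hs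
    have hm : |max (s - 1) 0| ≤ |s - 1| := by
      rcases le_total (s - 1) 0 with h' | h'
      · rw [max_eq_right h']; simp
      · rw [max_eq_left h']
    have hm0 : (0:ℝ) ≤ max (s - 1) 0 := le_max_right _ _
    simp only [smul_zero, sub_zero]
    have : ‖(1/2 : ℝ) * (max (s - 1) 0) ^ 2 - (1/2) * (max (1 - 1 : ℝ) 0) ^ 2‖
        = (1/2) * (max (s - 1) 0) ^ 2 := by
      norm_num
    rw [this]
    have h2 : (max (s - 1) 0) ^ 2 ≤ |s - 1| ^ 2 := by
      rw [← sq_abs (max (s-1) 0)]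
      exact pow_le_pow_left₀ (abs_nonneg _) hm 2
    calc (1/2) * (max (s - 1) 0) ^ 2 ≤ (1/2) * |s - 1| ^ 2 := by linarith
      _ ≤ (1/2) * ((2*c) * |s-1|) := by
          have := abs_nonneg (s-1)
          nlinarith [sq_nonneg (s-1)]
      _ = c * |s - 1| := by ring
      _ = c * ‖s - 1‖ := rfl
  · have he : (fun s : ℝ => (1/2) * (max (s - 1) 0) ^ 2)
        =ᶠ[nhds t] fun s => (1/2) * (s - 1) ^ 2 := by
      filter_upwards [Ioi_mem_nhds h] with s hs
      rw [max_eq_left (by linarith [Set.mem_Ioi.1 hs])]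
    have hd : HasDerivAt (fun s : ℝ => (1/2) * (s - 1) ^ 2) (t - 1) t := by
      have := (((hasDerivAt_id t).sub_const 1).pow 2).const_mul (1/2 : ℝ)
      refine this.congr_deriv ?_
      simp
    rw [max_eq_left (by linarith)]
    exact hd.congr_of_eventuallyEq he

theorem gC1 : ContDiff ℝ 1 (fun t : ℝ => (1/2) * (max (t - 1) 0) ^ 2) := by
  rw [contDiff_one_iff_deriv]
  refine ⟨fun t => (g_hasDerivAt t).differentiableAt, ?_⟩
  have hderiv : deriv (fun s : ℝ => (1/2) * (max (s - 1) 0) ^ 2) = fun t => max (t - 1) 0 := by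
    funext t; exact (g_hasDerivAt t).deriv
  rw [hderiv]
  exact (continuous_id.sub continuous_const).max continuous_const

theorem gConv : ConvexOn ℝ Set.univ (fun t : ℝ => (1/2) * (max (t - 1) 0) ^ 2) := by
  apply MonotoneOn.convexOn_of_deriv convex_univ gC1.continuous.continuousOn
  · exact fun t _ => (g_hasDerivAt t).differentiableAt.differentiableWithinAt
  · intro a _ b _ hab
    rw [(g_hasDerivAt a).deriv, (g_hasDerivAt b).deriv]
    exact max_le_max (by linarith) le_rfl

theorem gMono : Monotone (fun t : ℝ => (1/2) * (max (t - 1) 0) ^ 2) := by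
  intro a b hab
  dsimp only
  have h1 : max (a-1) 0 ≤ max (b-1) 0 := max_le_max (by linarith) le_rfl
  have h0 : (0:ℝ) ≤ max (a-1) 0 := le_max_right _ _
  nlinarith

theorem hess_entry {x : EuclideanSpace ℝ (Fin 2)} (hx : 1 < ‖x‖)
    {u : EuclideanSpace ℝ (Fin 2) → ℝ}
    (hu : u = fun y => (1 / 2) * (max (‖y‖ - 1) 0) ^ 2)
    (v w : EuclideanSpace ℝ (Fin 2)) :
    iteratedFDeriv ℝ 2 u x ![v, w]
      = (1 - ‖x‖⁻¹) * (inner ℝ v w : ℝ)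
        + (‖x‖ ^ 3)⁻¹ * (inner ℝ x v : ℝ) * (inner ℝ x w : ℝ) := by
  have hx0 : x ≠ 0 := by
    intro h0; rw [h0, norm_zero] at hx; linarith
  have hS : IsOpen {y : EuclideanSpace ℝ (Fin 2) | 1 < ‖y‖} :=
    isOpen_lt continuous_const continuous_norm
  have key : ∀ y ∈ {y : EuclideanSpace ℝ (Fin 2) | 1 < ‖y‖}, fderiv ℝ u y = Fmap y := by
    intro y hy
    have hy1 : 1 < ‖y‖ := hy
    have hy0 : y ≠ 0 := by intro h0; rw [h0, norm_zero] at hy1; linarith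
    have heq : u =ᶠ[nhds y] fun z => (1/2) * ‖z‖ ^ 2 - ‖z‖ + 1/2 := by
      filter_upwards [hS.mem_nhds hy] with z hz
      rw [hu]
      dsimp only
      have hz1 : 1 < ‖z‖ := hz
      rw [max_eq_left (by linarith : (0:ℝ) ≤ ‖z‖ - 1)]
      ring
    rw [heq.fderiv_eq]
    exact (v_hasFDerivAt hy0).fderiv
  have hev : fderiv ℝ u =ᶠ[nhds x] Fmap := by
    filter_upwards [hS.mem_nhds hx] with y hy using key y hy
  have h2 : fderiv ℝ (fderiv ℝ u) x
      = (1 - ‖x‖⁻¹) • (innerCLM : EuclideanSpace ℝ (Fin 2) →L[ℝ] _)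
        + ((‖x‖ ^ 3)⁻¹ • innerSL ℝ x).smulRight (innerSL ℝ x) := by
    rw [hev.fderiv_eq]
    exact (F_hasFDerivAt hx0).fderiv
  rw [iteratedFDeriv_two_apply, h2]
  simp [mul_assoc]

theorem zero_entry {x : EuclideanSpace ℝ (Fin 2)} (hx : ‖x‖ < 1)
    {u : EuclideanSpace ℝ (Fin 2) → ℝ}
    (hu : u = fun y => (1 / 2) * (max (‖y‖ - 1) 0) ^ 2)
    (m : Fin 2 → EuclideanSpace ℝ (Fin 2)) :
    iteratedFDeriv ℝ 2 u x m = 0 := by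
  have hS : IsOpen {y : EuclideanSpace ℝ (Fin 2) | ‖y‖ < 1} :=
    isOpen_lt continuous_norm continuous_const
  have key : ∀ y ∈ {y : EuclideanSpace ℝ (Fin 2) | ‖y‖ < 1},
      fderiv ℝ u y = (0 : EuclideanSpace ℝ (Fin 2) →L[ℝ] ℝ) := by
    intro y hy
    have heq : u =ᶠ[nhds y] fun _ => (0:ℝ) := by
      filter_upwards [hS.mem_nhds hy] with z hz
      have hz1 : ‖z‖ < 1 := hz
      rw [hu]
      dsimp only
      rw [max_eq_right (by linarith)]
      ring
    rw [heq.fderiv_eq]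
    exact fderiv_const_apply 0
  have hev : fderiv ℝ u =ᶠ[nhds x] fun _ => (0 : EuclideanSpace ℝ (Fin 2) →L[ℝ] ℝ) := by
    filter_upwards [hS.mem_nhds hx] with y hy using key y hy
  rw [iteratedFDeriv_two_apply, hev.fderiv_eq]
  simp

/-- The function `u(x) = ½((‖x‖−1)⁺)²` on `ℝ²` is convex and `C¹`; on `{‖x‖ > 1}` it is
twice differentiable with `det D²u = 1 − 1/‖x‖`, and on `{‖x‖ < 1}` it vanishes with
`det D²u = 0`. -/
theorem stmt_13 (u : EuclideanSpace ℝ (Fin 2) → ℝ)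
    (hu : u = fun x => (1 / 2) * (max (‖x‖ - 1) 0) ^ 2) :
    ConvexOn ℝ Set.univ u ∧ ContDiff ℝ 1 u ∧
    (∀ x, 1 < ‖x‖ →
      ContDiffAt ℝ 2 u x ∧ (hessianMatrix u x).det = 1 - 1 / ‖x‖) ∧
    (∀ x, ‖x‖ < 1 → u x = 0 ∧ (hessianMatrix u x).det = 0) := by
  refine ⟨?_, ?_, ?_, ?_⟩
  · -- convexity
    subst hu
    refine ⟨convex_univ, fun x _ y _ a b ha hb hab => ?_⟩
    have hnorm : ‖a • x + b • y‖ ≤ a * ‖x‖ + b * ‖y‖ := by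
      calc ‖a • x + b • y‖ ≤ ‖a • x‖ + ‖b • y‖ := norm_add_le _ _
        _ = a * ‖x‖ + b * ‖y‖ := by
            rw [norm_smul, norm_smul, Real.norm_eq_abs, Real.norm_eq_abs,
              abs_of_nonneg ha, abs_of_nonneg hb]
    calc (1/2) * (max (‖a • x + b • y‖ - 1) 0) ^ 2
        ≤ (1/2) * (max (a * ‖x‖ + b * ‖y‖ - 1) 0) ^ 2 := gMono hnorm
      _ = (1/2) * (max ((a • ‖x‖ + b • ‖y‖) - 1) 0) ^ 2 := by norm_num
      _ ≤ a • ((1/2) * (max (‖x‖ - 1) 0) ^ 2) + b • ((1/2) * (max (‖y‖ - 1) 0) ^ 2) :=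
          gConv.2 (Set.mem_univ ‖x‖) (Set.mem_univ ‖y‖) ha hb hab
      _ = a * ((1/2) * (max (‖x‖ - 1) 0) ^ 2) + b * ((1/2) * (max (‖y‖ - 1) 0) ^ 2) := by
          norm_num
  · -- C¹
    rw [contDiff_iff_contDiffAt]
    intro x
    by_cases h : ‖x‖ < 1
    · have hS : IsOpen {y : EuclideanSpace ℝ (Fin 2) | ‖y‖ < 1} :=
        isOpen_lt continuous_norm continuous_const
      refine (contDiffAt_const (c := (0:ℝ))).congr_of_eventuallyEq ?_
      filter_upwards [hS.mem_nhds h] with z hz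
      have hz1 : ‖z‖ < 1 := hz
      rw [hu]
      dsimp only
      rw [max_eq_right (by linarith)]
      ring
    · have hx0 : x ≠ 0 := by
        intro h0; rw [h0, norm_zero] at h; exact h one_pos
      have := (gC1.contDiffAt (x := ‖x‖)).comp x (contDiffAt_norm ℝ hx0)
      refine this.congr_of_eventuallyEq (Filter.Eventually.of_forall fun y => ?_)
      rw [hu]
      rfl
  · -- region ‖x‖ > 1
    intro x hx
    have hx0 : x ≠ 0 := by
      intro h0; rw [h0, norm_zero] at hx; linarith
    have hn : ‖x‖ ≠ 0 := norm_ne_zero_iff.2 hx0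
    constructor
    · have hS : IsOpen {y : EuclideanSpace ℝ (Fin 2) | 1 < ‖y‖} :=
        isOpen_lt continuous_const continuous_norm
      have hv : ContDiffAt ℝ 2 (fun y : EuclideanSpace ℝ (Fin 2) =>
          (1/2) * ‖y‖ ^ 2 - ‖y‖ + 1/2) x :=
        (((contDiffAt_const (c := (1/2:ℝ))).mul (contDiff_norm_sq ℝ).contDiffAt).sub
          (contDiffAt_norm ℝ hx0)).add contDiffAt_const
      refine hv.congr_of_eventuallyEq ?_
      filter_upwards [hS.mem_nhds hx] with z hz
      have hz1 : 1 < ‖z‖ := hz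
      rw [hu]
      dsimp only
      rw [max_eq_left (by linarith)]
      ring
    · have hsq : x 0 * x 0 + x 1 * x 1 = ‖x‖ ^ 2 := by
        have := real_inner_self_eq_norm_sq x
        rw [← this, PiLp.inner_apply]
        simp [RCLike.inner_apply, Fin.sum_univ_two]; ring
      have hij : ∀ i j : Fin 2, hessianMatrix u x i j
          = (1 - ‖x‖⁻¹) * (if i = j then (1:ℝ) else 0) + (‖x‖ ^ 3)⁻¹ * (x i * x j) := by
        intro i j
        show iteratedFDeriv ℝ 2 u x ![_, _] = _
        rw [hess_entry hx hu]
        congr 1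
        · congr 1
          rw [EuclideanSpace.inner_single_right]
          simp [EuclideanSpace.single_apply]
          split <;> simp_all [eq_comm]
        · rw [EuclideanSpace.inner_single_right, EuclideanSpace.inner_single_right]
          simp
          ring
      rw [Matrix.det_fin_two, hij 0 0, hij 0 1, hij 1 0, hij 1 1]
      simp only [if_pos rfl, if_neg (by decide : ¬(0:Fin 2) = 1),
        if_neg (by decide : ¬(1:Fin 2) = 0), if_true, eq_self_iff_true]
      have expand :
          ((1 - ‖x‖⁻¹) * 1 + (‖x‖ ^ 3)⁻¹ * (x 0 * x 0))
            * ((1 - ‖x‖⁻¹) * 1 + (‖x‖ ^ 3)⁻¹ * (x 1 * x 1))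
          - ((1 - ‖x‖⁻¹) * 0 + (‖x‖ ^ 3)⁻¹ * (x 0 * x 1))
            * ((1 - ‖x‖⁻¹) * 0 + (‖x‖ ^ 3)⁻¹ * (x 1 * x 0))
          = (1 - ‖x‖⁻¹) ^ 2 + (1 - ‖x‖⁻¹) * (‖x‖ ^ 3)⁻¹ * (x 0 * x 0 + x 1 * x 1) := by
        ring
      rw [expand, hsq]
      field_simp
      ring
  · -- region ‖x‖ < 1
    intro x hx
    constructor
    · rw [hu]
      dsimp only
      rw [max_eq_right (by linarith)]
      ring
    · have hij : ∀ i j : Fin 2, hessianMatrix u x i j = 0 := fun i j =>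
        zero_entry hx hu _
      rw [Matrix.det_fin_two, hij 0 0, hij 0 1, hij 1 0, hij 1 1]
      ring
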